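/- Let μ be the semicircular distribution of variance s > 0, whose Cauchy transform is G(z) = (z - √(z² - 4s))/(2s) on the upper half-plane (with the branch of the square root making G(z) → 0 as |z| → ∞). For t > 0, the map H_t(z) = z + t·G(z) satisfies: for q ∈ ℝ with |q| ≤ 2√(s+t), the point z_q = ((2s+t)q + it√(4(s+t) - q²))/(2(s+t)) satisfies H_t(z_q) = q. -/

import Mathlib

open Filter

noncomputable def auxF (σ : ℝ) (u : ℂ) : ℂ :=
  (↑(σ * Real.sqrt ((‖u‖ + u.re) / 2)) : ℂ)
    + (↑(Real.sqrt ((‖u‖ - u.re) / 2)) : ℂ) * Complex.I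

lemma auxF_re (σ : ℝ) (u : ℂ) :
    (auxF σ u).re = σ * Real.sqrt ((‖u‖ + u.re) / 2) := by
  simp [auxF]

lemma auxF_im (σ : ℝ) (u : ℂ) :
    (auxF σ u).im = Real.sqrt ((‖u‖ - u.re) / 2) := by
  simp [auxF]

lemma auxF_cont (σ : ℝ) : Continuous (auxF σ) := by
  unfold auxF
  have h : Continuous (fun z : ℂ => ‖z‖) := continuous_norm
  fun_prop

lemma auxF_sq (σ : ℝ) (hσ : σ = 1 ∨ σ = -1) (u : ℂ) (hu : 0 ≤ σ * u.im) :
    (auxF σ u) ^ 2 = u := by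
  have h1 : |u.re| ≤ ‖u‖ := Complex.abs_re_le_norm u
  have hp : 0 ≤ (‖u‖ + u.re) / 2 := by
    have := neg_abs_le u.re; linarith
  have hm : 0 ≤ (‖u‖ - u.re) / 2 := by
    have := le_abs_self u.re; linarith
  have e1 := Real.mul_self_sqrt hp
  have e2 := Real.mul_self_sqrt hm
  have e3 : Real.sqrt ((‖u‖ + u.re) / 2) * Real.sqrt ((‖u‖ - u.re) / 2)
      = |u.im| / 2 := by
    rw [← Real.sqrt_mul hp]
    have h4 : (‖u‖ + u.re) / 2 * ((‖u‖ - u.re) / 2) = (u.im / 2) ^ 2 := by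
      have h5 : ‖u‖ ^ 2 = u.re * u.re + u.im * u.im := by
        rw [Complex.sq_norm, Complex.normSq_apply]
      nlinarith [h5]
    rw [h4, Real.sqrt_sq_eq_abs, abs_div]
    norm_num
  apply Complex.ext
  · rw [pow_two, Complex.mul_re, auxF_re, auxF_im]
    rcases hσ with h | h <;> subst h <;> nlinarith [e1, e2]
  · rw [pow_two, Complex.mul_im, auxF_re, auxF_im]
    rcases hσ with h | h <;> subst h
    · have : 0 ≤ u.im := by linarith [hu]
      rw [abs_of_nonneg this] at e3; nlinarith [e3]
    · have : u.im ≤ 0 := by nlinarith [hu]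
      rw [abs_of_nonpos this] at e3; nlinarith [e3]

lemma auxF_of_sq (σ : ℝ) (hσ : σ = 1 ∨ σ = -1) (w : ℂ) (him : 0 ≤ w.im)
    (hre : 0 ≤ σ * w.re) : auxF σ (w ^ 2) = w := by
  have h1 : (w ^ 2).re = w.re * w.re - w.im * w.im := by rw [pow_two, Complex.mul_re]
  have h2 : ‖w ^ 2‖ = w.re * w.re + w.im * w.im := by
    rw [norm_pow, Complex.sq_norm, Complex.normSq_apply]
  apply Complex.ext
  · rw [auxF_re]
    have h3 : (‖w ^ 2‖ + (w ^ 2).re) / 2 = w.re ^ 2 := by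
      rw [h1, h2]; ring
    rw [h3, Real.sqrt_sq_eq_abs]
    rcases hσ with h | h <;> subst h
    · rw [abs_of_nonneg (by linarith [hre])]; ring
    · rw [abs_of_nonpos (by nlinarith [hre])]; ring
  · rw [auxF_im]
    have h3 : (‖w ^ 2‖ - (w ^ 2).re) / 2 = w.im ^ 2 := by
      rw [h1, h2]; ring
    rw [h3, Real.sqrt_sq_eq_abs, abs_of_nonneg him]

set_option maxHeartbeats 1000000 in
/-- With `G(z) = (z - √(z²-4s))/(2s)` (the branch of the square root on the
closed upper half-plane, continuous there and asymptotic to `z` at infinity) and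
`H_t(z) = z + tG(z)`, for real `q` with `|q| ≤ 2√(s+t)` the point
`z_q = ((2s+t)q + it√(4(s+t)-q²))/(2(s+t))` satisfies `H_t(z_q) = q`. -/
theorem stmt_10 (s t : ℝ) (hs : 0 < s) (ht : 0 < t)
    (sq : ℂ → ℂ)
    (hsq_sq : ∀ z : ℂ, 0 ≤ z.im → sq z ^ 2 = z ^ 2 - 4 * (s : ℂ))
    (hsq_cont : ContinuousOn sq {z : ℂ | 0 ≤ z.im})
    (hsq_asymp : Tendsto (fun z => sq z / z)
      (comap (fun z : ℂ => ‖z‖) atTop ⊓ Filter.principal {z : ℂ | 0 ≤ z.im}) (nhds 1))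
    (q : ℝ) (hq : |q| ≤ 2 * Real.sqrt (s + t)) :
    (fun z : ℂ => z + (t : ℂ) * ((z - sq z) / (2 * (s : ℂ))))
      ((((2 * s + t) * q : ℝ) : ℂ) / (2 * ((s : ℂ) + t))
        + Complex.I * ((t * Real.sqrt (4 * (s + t) - q ^ 2) : ℝ) : ℂ) / (2 * ((s : ℂ) + t)))
      = (q : ℂ) := by
  have hst : (0:ℝ) < s + t := by linarith
  have hD : 0 ≤ 4 * (s + t) - q ^ 2 := by
    nlinarith [Real.sq_sqrt hst.le, pow_le_pow_left₀ (abs_nonneg q) hq 2, sq_abs q,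
      Real.sqrt_nonneg (s + t)]
  set R : ℝ := Real.sqrt (4 * (s + t) - q ^ 2) with hRdef
  have hR : 0 ≤ R := Real.sqrt_nonneg _
  have hR2 : R ^ 2 = 4 * (s + t) - q ^ 2 := Real.sq_sqrt hD
  set σ : ℝ := if 0 ≤ q then 1 else -1 with hσdef
  have hσ : σ = 1 ∨ σ = -1 := by
    by_cases h : 0 ≤ q <;> simp [hσdef, h]
  have hσq : 0 ≤ σ * q := by
    by_cases h : 0 ≤ q <;> simp [hσdef, h] <;> linarith
  set x : ℝ := (2 * s + t) * q / (2 * (s + t)) with hxdef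
  set y₀ : ℝ := t * R / (2 * (s + t)) with hy₀def
  set p : ℝ := t * q / (2 * (s + t)) with hpdef
  set r : ℝ := (2 * s + t) * R / (2 * (s + t)) with hrdef
  have hy₀ : 0 ≤ y₀ := by
    rw [hy₀def]; positivity
  have hσx : 0 ≤ σ * x := by
    have : σ * x = (2 * s + t) * (σ * q) / (2 * (s + t)) := by rw [hxdef]; ring
    rw [this]; positivity
  have hσp : 0 ≤ σ * p := by
    have : σ * p = t * (σ * q) / (2 * (s + t)) := by rw [hpdef]; ring
    rw [this]; positivity
  have hr : 0 ≤ r := by rw [hrdef]; positivity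
  set Z : ℝ → ℂ := fun y => (x : ℂ) + (y : ℂ) * Complex.I with hZdef
  have hZre : ∀ y, (Z y).re = x := by intro y; simp [hZdef]
  have hZim : ∀ y, (Z y).im = y := by intro y; simp [hZdef]
  set U : ℝ → ℂ := fun y => (Z y) ^ 2 - 4 * (s : ℂ) with hUdef
  have hUre : ∀ y, (U y).re = x ^ 2 - y ^ 2 - 4 * s := by
    intro y; simp [hUdef, hZdef, pow_two, Complex.mul_re]; try ring
  have hUim : ∀ y, (U y).im = 2 * x * y := by
    intro y; simp [hUdef, hZdef, pow_two, Complex.mul_im]; try ring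
  -- square property of auxF along the ray
  have hFsq : ∀ y : ℝ, 0 ≤ y → (auxF σ (U y)) ^ 2 = U y := by
    intro y hy
    apply auxF_sq σ hσ
    rw [hUim]
    nlinarith [hσx, hy]
  -- nonvanishing of U along the ray
  have hUne : ∀ y : ℝ, y₀ ≤ y → U y ≠ 0 := by
    intro y hy h0
    have hre0 : x ^ 2 - y ^ 2 - 4 * s = 0 := by rw [← hUre y, h0]; simp
    have him0 : 2 * x * y = 0 := by rw [← hUim y, h0]; simp
    have hy0 : 0 ≤ y := le_trans hy₀ hy
    rcases hy0.lt_or_eq with hlt | heq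
    · have hx0 : x = 0 := by
        rcases mul_eq_zero.mp him0 with h | h
        · rcases mul_eq_zero.mp h with h | h
          · norm_num at h
          · exact h
        · exact absurd h (ne_of_gt hlt)
      rw [hx0] at hre0; nlinarith
    · -- y = 0, hence y₀ = 0, hence R = 0, hence q² = 4(s+t)
      rw [← heq] at hy hre0
      have hy₀0 : y₀ = 0 := le_antisymm hy hy₀
      have hR0 : R = 0 := by
        rw [hy₀def, div_eq_zero_iff] at hy₀0
        rcases hy₀0 with h | h
        · rcases mul_eq_zero.mp h with h | h
          · exact absurd h (ne_of_gt ht)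
          · exact h
        · exfalso; linarith
      have hq2 : q ^ 2 = 4 * (s + t) := by
        rw [hR0] at hR2; nlinarith [hR2]
      have hx2 : x ^ 2 = 4 * s := by nlinarith [hre0]
      have hx2' : ((2 * s + t) * q) ^ 2 = x ^ 2 * (2 * (s + t)) ^ 2 := by
        rw [hxdef]; field_simp
      rw [hx2] at hx2'
      have h6 : (2 * s + t) ^ 2 * (4 * (s + t)) = 4 * s * (2 * (s + t)) ^ 2 := by
        rw [← hq2]; linear_combination hx2'
      have h7 : (s + t) * t ^ 2 = 0 := by linear_combination h6 / 4
      exact absurd h7 (ne_of_gt (by positivity))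
  have hFne : ∀ y : ℝ, y₀ ≤ y → auxF σ (U y) ≠ 0 := by
    intro y hy h0
    exact hUne y hy (by rw [← hFsq y (le_trans hy₀ hy), h0]; ring)
  have hsq2 : ∀ y : ℝ, 0 ≤ y → (sq (Z y)) ^ 2 = U y := by
    intro y hy
    rw [hUdef]
    exact hsq_sq (Z y) (by rw [hZim]; exact hy)
  set ε : ℝ → ℂ := fun y => sq (Z y) / auxF σ (U y) with hεdef
  have hεpm : ∀ y : ℝ, y₀ ≤ y → ε y = 1 ∨ ε y = -1 := by
    intro y hy
    have h2 : (ε y) ^ 2 = 1 := by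
      rw [hεdef]
      simp only [div_pow]
      rw [hsq2 y (le_trans hy₀ hy), hFsq y (le_trans hy₀ hy), div_self (hUne y hy)]
    have h3 : (ε y - 1) * (ε y + 1) = 0 := by linear_combination h2
    rcases mul_eq_zero.mp h3 with h | h
    · left; linear_combination h
    · right; linear_combination h
  -- continuity of Z, U, ε
  have hZcont : Continuous Z := by
    rw [hZdef]
    have := Complex.continuous_ofReal
    fun_prop
  have hUcont : Continuous U := by
    rw [hUdef]; fun_prop
  have hεcont : ContinuousOn ε (Set.Ici y₀) := by
    rw [hεdef]
    apply ContinuousOn.div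
    · exact hsq_cont.comp hZcont.continuousOn
        (fun y hy => by simp only [Set.mem_setOf_eq, hZim]; exact le_trans hy₀ hy)
    · exact ((auxF_cont σ).comp hUcont).continuousOn
    · exact fun y hy => hFne y hy
  -- Z tends to the filter at infinity
  have hZtend : Tendsto Z atTop
      (comap (fun z : ℂ => ‖z‖) atTop ⊓ Filter.principal {z : ℂ | 0 ≤ z.im}) := by
    refine tendsto_inf.mpr ⟨?_, ?_⟩
    · rw [tendsto_comap_iff]
      refine tendsto_atTop_mono (fun y => ?_) tendsto_id
      calc y ≤ |y| := le_abs_self y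
        _ = |(Z y).im| := by rw [hZim]
        _ ≤ ‖Z y‖ := Complex.abs_im_le_norm (Z y)
    · rw [tendsto_principal]
      filter_upwards [eventually_ge_atTop (0:ℝ)] with y hy
      simp only [Set.mem_setOf_eq, hZim]
      exact hy
  have h1 : Tendsto (fun y => sq (Z y) / Z y) atTop (nhds 1) := hsq_asymp.comp hZtend
  -- F/Z tends to 1
  have h2 : Tendsto (fun y => auxF σ (U y) / Z y) atTop (nhds 1) := by
    have hbound : ∀ y : ℝ, 1 ≤ y → ‖auxF σ (U y) / Z y - 1‖ ≤ 4 * s / y ^ 2 := by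
      intro y hy1
      have hy0 : (0:ℝ) < y := by linarith
      have hZne : Z y ≠ 0 := fun h => by
        have := hZim y; rw [h] at this; simp at this; linarith
      have hFim : 0 ≤ (auxF σ (U y)).im := by rw [auxF_im]; exact Real.sqrt_nonneg _
      have hFZim : y ≤ (auxF σ (U y) + Z y).im := by
        rw [Complex.add_im, hZim]; linarith
      have hFZne : auxF σ (U y) + Z y ≠ 0 := fun h => by
        rw [h] at hFZim; simp at hFZim; linarith
      have hF2 : (auxF σ (U y)) ^ 2 = (Z y) ^ 2 - 4 * (s:ℂ) := by
        rw [hFsq y (by linarith), hUdef]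
      have hfz : (auxF σ (U y) - Z y) * (auxF σ (U y) + Z y) = -(4 * (s:ℂ)) := by
        linear_combination hF2
      have hid : auxF σ (U y) / Z y - 1 = (-(4 * (s:ℂ))) / ((auxF σ (U y) + Z y) * Z y) := by
        rw [div_sub_one hZne, div_eq_div_iff hZne (mul_ne_zero hFZne hZne)]
        linear_combination (Z y) * hfz
      rw [hid]
      rw [norm_div, norm_mul]
      have hZabs : y ≤ ‖Z y‖ := by
        calc y ≤ |y| := le_abs_self y
          _ = |(Z y).im| := by rw [hZim]
          _ ≤ ‖Z y‖ := Complex.abs_im_le_norm (Z y)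
      have hFZabs : y ≤ ‖auxF σ (U y) + Z y‖ := by
        calc y ≤ (auxF σ (U y) + Z y).im := hFZim
          _ ≤ |(auxF σ (U y) + Z y).im| := le_abs_self _
          _ ≤ ‖auxF σ (U y) + Z y‖ := Complex.abs_im_le_norm _
      have hnum : ‖(-(4 * (s:ℂ)))‖ = 4 * s := by
        rw [norm_neg, show (4 * (s:ℂ)) = ((4 * s : ℝ) : ℂ) by push_cast; ring,
          Complex.norm_real, Real.norm_eq_abs, abs_of_nonneg (by linarith)]
      rw [hnum]
      have hden : y ^ 2 ≤ ‖auxF σ (U y) + Z y‖ * ‖Z y‖ := by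
        calc y ^ 2 = y * y := by ring
          _ ≤ _ := mul_le_mul hFZabs hZabs hy0.le (norm_nonneg _)
      exact div_le_div_of_nonneg_left (by linarith) (by positivity) hden
    have hlim4s : Tendsto (fun y : ℝ => 4 * s / y ^ 2) atTop (nhds 0) := by
      apply Tendsto.div_atTop tendsto_const_nhds
      exact tendsto_pow_atTop (by norm_num)
    have hlim0 : Tendsto (fun y => auxF σ (U y) / Z y - 1) atTop (nhds 0) := by
      apply squeeze_zero_norm' _ hlim4s
      filter_upwards [eventually_ge_atTop (1:ℝ)] with y hy
      exact hbound y hy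
    have := hlim0.add (tendsto_const_nhds : Tendsto (fun _ : ℝ => (1:ℂ)) atTop (nhds 1))
    simpa using this
  -- ε tends to 1
  have hεlim : Tendsto ε atTop (nhds 1) := by
    have h3 := h1.div h2 one_ne_zero
    rw [div_one] at h3
    apply h3.congr'
    filter_upwards [eventually_ge_atTop (1:ℝ)] with y hy
    have hZne : Z y ≠ 0 := fun h => by
      have := hZim y; rw [h] at this; simp at this; linarith
    simp only [Pi.div_apply, hεdef]
    by_cases hF : auxF σ (U y) = 0
    · simp [hF]
    · field_simp
  -- the sign is + : ε y₀ = 1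
  have hkey : ε y₀ = 1 := by
    by_contra hne
    have hε0 : ε y₀ = -1 := (hεpm y₀ le_rfl).resolve_left hne
    have hev : ∀ᶠ y in atTop, ‖ε y - 1‖ < 1 := by
      have h4 := Metric.tendsto_nhds.mp hεlim 1 one_pos
      filter_upwards [h4] with y hy
      rwa [dist_eq_norm] at hy
    obtain ⟨Y, hY1, hY2⟩ := (hev.and (eventually_ge_atTop y₀)).exists
    have hεY : ε Y = 1 := by
      rcases hεpm Y hY2 with h | h
      · exact h
      · rw [h] at hY1
        have he : ((-1 : ℂ) - 1) = -2 := by ring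
        rw [he] at hY1
        simp at hY1
    have hgc : ContinuousOn (fun y => (ε y).re) (Set.Icc y₀ Y) :=
      Complex.continuous_re.comp_continuousOn (hεcont.mono Set.Icc_subset_Ici_self)
    have h0mem : (0:ℝ) ∈ Set.Icc ((ε y₀).re) ((ε Y).re) := by
      rw [hε0, hεY]
      simp
    obtain ⟨c, hc, hc0⟩ := intermediate_value_Icc hY2 hgc h0mem
    have hc0' : (ε c).re = 0 := hc0
    rcases hεpm c (Set.Icc_subset_Ici_self hc) with h | h <;> rw [h] at hc0' <;>
      simp at hc0'
  have hsqval : sq (Z y₀) = auxF σ (U y₀) := by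
    have h5 : sq (Z y₀) / auxF σ (U y₀) = 1 := hkey
    exact (div_eq_one_iff_eq (hFne y₀ le_rfl)).mp h5
  -- identify auxF σ (U y₀) with the explicit point w
  set w : ℂ := (p : ℂ) + (r : ℂ) * Complex.I with hwdef
  have hwre' : w.re = p := by simp [hwdef]
  have hwim' : w.im = r := by simp [hwdef]
  have hwim : 0 ≤ w.im := by rw [hwim']; exact hr
  have hwre : 0 ≤ σ * w.re := by rw [hwre']; exact hσp
  have hw2 : w ^ 2 = U y₀ := by
    have e1m : (t*q)^2 - ((2*s+t)*R)^2 = ((2*s+t)*q)^2 - (t*R)^2 - 4*s*(2*(s+t))^2 := by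
      linear_combination (t^2 - (2*s+t)^2) * hR2
    have e1 : p ^ 2 - r ^ 2 = x ^ 2 - y₀ ^ 2 - 4 * s := by
      rw [hpdef, hrdef, hxdef, hy₀def]
      field_simp
      linear_combination e1m
    have e2 : p * r = x * y₀ := by
      rw [hpdef, hrdef, hxdef, hy₀def]; ring
    apply Complex.ext
    · rw [pow_two, Complex.mul_re, hwre', hwim', hUre]
      linear_combination e1
    · rw [pow_two, Complex.mul_im, hwre', hwim', hUim]
      linear_combination 2 * e2
  have hFw : auxF σ (U y₀) = w := by
    rw [← hw2]; exact auxF_of_sq σ hσ w hwim hwre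
  have hsqZ : sq (Z y₀) = w := by rw [hsqval, hFw]
  -- rewrite the point in the goal
  have hstC : ((s:ℂ) + t) ≠ 0 := by
    have h6 : ((s + t : ℝ) : ℂ) ≠ 0 := by exact_mod_cast ne_of_gt hst
    push_cast at h6
    exact h6
  have hsC : ((s:ℂ)) ≠ 0 := by exact_mod_cast ne_of_gt hs
  have hpoint : (((2 * s + t) * q : ℝ) : ℂ) / (2 * ((s : ℂ) + t))
      + Complex.I * ((t * R : ℝ) : ℂ) / (2 * ((s : ℂ) + t)) = Z y₀ := by
    have hZy : Z y₀ = (x:ℂ) + (y₀:ℂ) * Complex.I := by rw [hZdef]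
    rw [hZy, hxdef, hy₀def]
    push_cast
    field_simp
  rw [hpoint]
  show Z y₀ + (t:ℂ) * ((Z y₀ - sq (Z y₀)) / (2 * (s:ℂ))) = (q:ℂ)
  rw [hsqZ]
  have hZy : Z y₀ = (x:ℂ) + (y₀:ℂ) * Complex.I := by rw [hZdef]
  rw [hZy, hwdef, hxdef, hy₀def, hpdef, hrdef]
  push_cast
  field_simp
  ring
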